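/- Let F be a finite group, N a normal subgroup of F, and P a p-subgroup of F for a prime p. If the order of N is coprime to p, then the normalizer in F/N of the image PN/N of P equals the image of the normalizer of P, i.e. N_{F/N}(PN/N) = (N_F(P)N)/N. -/

import Mathlib

open Pointwise

private lemma aux_relindex {F : Type*} [Group F] [Finite F] (p : ℕ) [Fact p.Prime]
    (N : Subgroup F) [N.Normal] (Q : Subgroup F) (hQ : IsPGroup p Q)
    (hcop : Nat.Coprime (Nat.card N) p) :
    Q.relIndex (Q ⊔ N) = Nat.card N := by
  obtain ⟨n, hn⟩ := hQ.exists_card_eq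
  have hinf : N ⊓ Q = ⊥ := by
    rw [← Subgroup.card_eq_one]
    have hd1 : Nat.card ↥(N ⊓ Q) ∣ Nat.card N := Subgroup.card_dvd_of_le inf_le_left
    have hd2 : Nat.card ↥(N ⊓ Q) ∣ Nat.card Q := Subgroup.card_dvd_of_le inf_le_right
    have hc : Nat.Coprime (Nat.card N) (Nat.card Q) := hn ▸ hcop.pow_right n
    exact Nat.dvd_one.mp (hc ▸ Nat.dvd_gcd hd1 hd2)
  have h1 : Nat.card Q * Q.relIndex (Q ⊔ N) = Nat.card ↥(Q ⊔ N) := by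
    have := Subgroup.relIndex_mul_relIndex (⊥ : Subgroup F) Q (Q ⊔ N) bot_le le_sup_left
    rwa [Subgroup.relIndex_bot_left, Subgroup.relIndex_bot_left] at this
  have h2 : N.relIndex (Q ⊔ N) = Nat.card Q := by
    rw [Subgroup.relIndex_sup_right, ← Subgroup.inf_relIndex_right, hinf,
      Subgroup.relIndex_bot_left]
  have h3 : Nat.card N * N.relIndex (Q ⊔ N) = Nat.card ↥(Q ⊔ N) := by
    have := Subgroup.relIndex_mul_relIndex (⊥ : Subgroup F) N (Q ⊔ N) bot_le le_sup_right
    rwa [Subgroup.relIndex_bot_left, Subgroup.relIndex_bot_left] at this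
  have hpos : 0 < Nat.card Q := Nat.card_pos
  apply Nat.eq_of_mul_eq_mul_left hpos
  rw [h1, ← h3, h2, mul_comm]

theorem normalizer_map_quotient_of_coprime {F : Type*} [Group F] [Finite F]
    (p : ℕ) [Fact p.Prime] (N : Subgroup F) [N.Normal] (P : Subgroup F)
    (hP : IsPGroup p P) (hcop : Nat.Coprime (Nat.card N) p) :
    Subgroup.normalizer ((P.map (QuotientGroup.mk' N) : Subgroup (F ⧸ N)) : Set (F ⧸ N))
      = (Subgroup.normalizer (P : Set F)).map (QuotientGroup.mk' N) := by
  classical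
  refine le_antisymm ?_ (Subgroup.le_normalizer_map _)
  set K : Subgroup F := P ⊔ N with hKdef
  have hPK : P ≤ K := le_sup_left
  have key : ∀ Q : Subgroup F, IsPGroup p Q → Q ⊔ N = K →
      ¬ p ∣ (Q.subgroupOf K).index := by
    intro Q hQ hsup
    have : (Q.subgroupOf K).index = Q.relIndex K := rfl
    rw [this, ← hsup, aux_relindex p N Q hQ hcop]
    intro hdvd
    have : p ∣ 1 := hcop ▸ Nat.dvd_gcd hdvd dvd_rfl
    exact (Fact.out : p.Prime).one_lt.ne' (Nat.dvd_one.mp this)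
  intro xb hxb
  obtain ⟨x, rfl⟩ := QuotientGroup.mk'_surjective N xb
  have hcomap : ((P.map (QuotientGroup.mk' N)).comap (QuotientGroup.mk' N)) = K := by
    rw [Subgroup.comap_map_eq, QuotientGroup.ker_mk']
  have hxK : x ∈ Subgroup.normalizer (K : Set F) := by
    have h := Subgroup.comap_normalizer_eq_of_surjective (P.map (QuotientGroup.mk' N))
      (QuotientGroup.mk'_surjective N)
    rw [hcomap] at h
    rw [← h]
    exact hxb
  have hKsmul : MulAut.conj x • K = K := by
    ext a
    rw [Subgroup.mem_pointwise_smul_iff_inv_smul_mem]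
    have h := Subgroup.mem_normalizer_iff.mp hxK (x⁻¹ * a * x)
    simp only [MulAut.smul_def, map_inv, MulAut.conj_inv_apply]
    constructor
    · intro hmem
      have := h.mp hmem
      simpa [mul_assoc] using this
    · intro hmem
      apply h.mpr
      simpa [mul_assoc] using hmem
  set Q : Subgroup F := MulAut.conj x • P with hQdef
  have hQp : IsPGroup p Q := by
    rw [hQdef, Subgroup.pointwise_smul_def]
    exact hP.map _
  have hQsup : Q ⊔ N = K := by
    rw [hQdef, ← Subgroup.Normal.conj_smul_eq_self x N, ← Subgroup.smul_sup, ← hKdef, hKsmul]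
  have hQK : Q ≤ K := hQsup ▸ le_sup_left
  let S : Sylow p K :=
    (hP.of_equiv (Subgroup.subgroupOfEquivOfLe hPK).symm).toSylow (key P hP rfl)
  let S' : Sylow p K :=
    (hQp.of_equiv (Subgroup.subgroupOfEquivOfLe hQK).symm).toSylow (key Q hQp hQsup)
  obtain ⟨k, hk⟩ := MulAction.exists_smul_eq K S' S
  have hcoe : (↑(k • S') : Subgroup K) = (S : Subgroup K) := by rw [hk]
  rw [Sylow.coe_subgroup_smul] at hcoe
  have hS' : (S' : Subgroup K) = Q.subgroupOf K := rfl
  have hS : (S : Subgroup K) = P.subgroupOf K := rfl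
  rw [hS', hS, Subgroup.conj_smul_subgroupOf hQK k] at hcoe
  have hk' : MulAut.conj (k : F) • Q = P := by
    have h1 : MulAut.conj (k : F) • Q ⊓ K = P ⊓ K := Subgroup.subgroupOf_inj.mp hcoe
    have h2 : MulAut.conj (k : F) • Q ≤ K := Subgroup.conj_smul_le_of_le hQK k
    rwa [inf_eq_left.mpr h2, inf_eq_left.mpr hPK] at h1
  have hPsmul : MulAut.conj ((k : F) * x) • P = P := by
    rw [map_mul, mul_smul, ← hQdef, hk']
  have hnorm : (k : F) * x ∈ (Subgroup.normalizer (P : Set F)) := by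
    rw [Subgroup.mem_normalizer_iff]
    intro h
    constructor
    · intro hh
      have : ((k : F) * x) * h * ((k : F) * x)⁻¹ ∈ MulAut.conj ((k : F) * x) • P := by
        rw [← MulAut.conj_apply]
        exact Subgroup.smul_mem_pointwise_smul _ _ _ hh
      rwa [hPsmul] at this
    · intro hh
      have : ((k : F) * x) * h * ((k : F) * x)⁻¹ ∈ MulAut.conj ((k : F) * x) • P := by
        rw [hPsmul]; exact hh
      rw [Subgroup.mem_pointwise_smul_iff_inv_smul_mem] at this
      simpa [MulAut.smul_def, mul_assoc] using this
  have hkK : (k : F) ∈ K := k.2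
  have hmapK : K.map (QuotientGroup.mk' N) ≤ (Subgroup.normalizer (P : Set F)).map (QuotientGroup.mk' N) := by
    rw [hKdef, Subgroup.map_sup]
    apply sup_le
    · exact Subgroup.map_mono Subgroup.le_normalizer
    · rw [(Subgroup.map_eq_bot_iff N).mpr (le_of_eq (QuotientGroup.ker_mk' N).symm)]
      exact bot_le
  have hxeq : QuotientGroup.mk' N x
      = (QuotientGroup.mk' N (k : F))⁻¹ * QuotientGroup.mk' N ((k : F) * x) := by
    rw [map_mul]; group
  rw [hxeq]
  exact Subgroup.mul_mem _
    (Subgroup.inv_mem _ (hmapK ⟨(k : F), hkK, rfl⟩))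
    ⟨(k : F) * x, hnorm, rfl⟩
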